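/- Let G be a tree. Then the strong chromatic index of G equals the maximum of d(u) + d(v) − 1 over edges uv of G. -/

import Mathlib

open SimpleGraph

/-- Two edges of `G` are within distance at most 2: they share a vertex, or some edge of `G`
joins an endpoint of one to an endpoint of the other. -/
def EdgesNear {V : Type*} (G : SimpleGraph V) (e f : Sym2 V) : Prop :=
  (∃ x, x ∈ e ∧ x ∈ f) ∨ (∃ x y, x ∈ e ∧ y ∈ f ∧ G.Adj x y)

/-- `c` assigns distinct colours to any two distinct edges of `G` at distance at most 2. -/
def IsStrongEdgeColoringOn {V : Type*} (G : SimpleGraph V) (c : Sym2 V → ℕ) : Prop :=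
  ∀ e ∈ G.edgeSet, ∀ f ∈ G.edgeSet, e ≠ f → EdgesNear G e f → c e ≠ c f

/-- A strong edge-colouring of `G` with `k` colours. -/
def IsStrongEdgeColoring {V : Type*} (G : SimpleGraph V) (k : ℕ) (c : Sym2 V → ℕ) : Prop :=
  (∀ e ∈ G.edgeSet, c e < k) ∧ IsStrongEdgeColoringOn G c

/-- The strong chromatic index of `G`. -/
noncomputable def sci {V : Type*} (G : SimpleGraph V) : ℕ :=
  sInf {k | ∃ c : Sym2 V → ℕ, IsStrongEdgeColoring G k c}

/-- Degree of a vertex (cardinality of its neighbour set). -/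
noncomputable def sdeg {V : Type*} (G : SimpleGraph V) (v : V) : ℕ :=
  (G.neighborSet v).ncard


lemma getVert_one_of_adj_mem_support {V : Type*} [DecidableEq V] {G : SimpleGraph V}
    (hac : G.IsAcyclic) {s t x : V} {Q : G.Walk s t} (hQ : Q.IsPath)
    (hadj : G.Adj s x) (hx : x ∈ Q.support) : Q.getVert 1 = x := by
  have h1 : (Q.takeUntil x hx).IsPath := hQ.takeUntil hx
  have h2 : (⟨Q.takeUntil x hx, h1⟩ : G.Path s x) = Path.singleton hadj :=
    isAcyclic_iff_path_unique.mp hac _ _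
  have h3 : Q.takeUntil x hx = Walk.cons hadj Walk.nil := by
    simpa [Path.singleton] using congrArg Subtype.val h2
  have h4 := Q.take_spec hx
  rw [h3] at h4
  rw [← h4]
  simp [Walk.cons_append]

lemma edgesNear_symm {V : Type*} {G : SimpleGraph V} {e f : Sym2 V}
    (h : EdgesNear G e f) : EdgesNear G f e := by
  rcases h with ⟨x, h1, h2⟩ | ⟨x, y, h1, h2, h3⟩
  · exact Or.inl ⟨x, h2, h1⟩
  · exact Or.inr ⟨y, x, h2, h1, h3.symm⟩

lemma edge_decomp {V : Type*} {G : SimpleGraph V} {f : Sym2 V} {u : V}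
    (hf : f ∈ G.edgeSet) (hu : u ∈ f) : ∃ w, G.Adj u w ∧ f = s(u, w) := by
  induction f using Sym2.ind with | _ x y =>
  rw [SimpleGraph.mem_edgeSet] at hf
  rcases Sym2.mem_iff.mp hu with rfl | rfl
  · exact ⟨y, hf, rfl⟩
  · exact ⟨x, hf.symm, Sym2.eq_swap⟩

lemma incidence_ncard {V : Type*} [Fintype V] (G : SimpleGraph V) (u : V) :
    {f ∈ G.edgeSet | u ∈ f}.ncard = sdeg G u := by
  have himg : {f ∈ G.edgeSet | u ∈ f} = (fun w => s(u, w)) '' G.neighborSet u := by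
    ext f
    simp only [Set.mem_setOf_eq, Set.mem_image, mem_neighborSet]
    constructor
    · rintro ⟨hf, hu⟩
      obtain ⟨w, hw, rfl⟩ := edge_decomp hf hu
      exact ⟨w, hw, rfl⟩
    · rintro ⟨w, hw, rfl⟩
      exact ⟨hw, Sym2.mem_mk_left u w⟩
  rw [himg, Set.ncard_image_of_injOn, sdeg]
  intro w hw w' hw' h
  have hadj : G.Adj u w := hw
  rcases Sym2.eq_iff.mp h with ⟨-, h2⟩ | ⟨-, h2⟩
  · exact h2
  · exact absurd (h2 ▸ hadj) (G.loopless.irrefl u)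

lemma edge_mem_incidence {V : Type*} {G : SimpleGraph V} {u v : V} (h : G.Adj u v) :
    s(u, v) ∈ {f ∈ G.edgeSet | u ∈ f} :=
  ⟨h, Sym2.mem_mk_left u v⟩

lemma near_of_mem_incidences {V : Type*} {G : SimpleGraph V} {u v : V} (huv : G.Adj u v)
    {f g : Sym2 V} (hf : u ∈ f ∨ v ∈ f) (hg : u ∈ g ∨ v ∈ g) : EdgesNear G f g := by
  rcases hf with hf | hf <;> rcases hg with hg | hg
  · exact Or.inl ⟨u, hf, hg⟩
  · exact Or.inr ⟨u, v, hf, hg, huv⟩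
  · exact Or.inr ⟨v, u, hf, hg, huv.symm⟩
  · exact Or.inl ⟨v, hf, hg⟩

lemma lower_bound {V : Type*} [Fintype V] {G : SimpleGraph V} {k : ℕ} {c : Sym2 V → ℕ}
    (hc : IsStrongEdgeColoring G k c) {u v : V} (huv : G.Adj u v) :
    sdeg G u + sdeg G v - 1 ≤ k := by
  classical
  set A := {f ∈ G.edgeSet | u ∈ f} with hA
  set B := {f ∈ G.edgeSet | v ∈ f} with hB
  have hABi : A ∩ B = {s(u, v)} := by
    ext f
    simp only [Set.mem_inter_iff, hA, hB, Set.mem_setOf_eq, Set.mem_singleton_iff]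
    constructor
    · rintro ⟨⟨hf, hu⟩, ⟨-, hv⟩⟩
      obtain ⟨w, hw, rfl⟩ := edge_decomp hf hu
      rcases Sym2.mem_iff.mp hv with rfl | rfl
      · exact absurd rfl (G.ne_of_adj huv)
      · rfl
    · rintro rfl
      exact ⟨⟨huv, Sym2.mem_mk_left u v⟩, ⟨huv, Sym2.mem_mk_right u v⟩⟩
  have hcard : (A ∪ B).ncard = sdeg G u + sdeg G v - 1 := by
    have h := Set.ncard_union_add_ncard_inter A B
    rw [hABi, Set.ncard_singleton, incidence_ncard, incidence_ncard] at h
    have h1 : 1 ≤ sdeg G u := (Set.ncard_pos (Set.toFinite _)).mpr ⟨v, huv⟩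
    omega
  have hinj : Set.InjOn c (A ∪ B) := by
    intro f hf g hg hfg
    by_contra hne
    have hfE : f ∈ G.edgeSet := by rcases hf with h | h <;> exact h.1
    have hgE : g ∈ G.edgeSet := by rcases hg with h | h <;> exact h.1
    exact hc.2 f hfE g hgE hne
      (near_of_mem_incidences huv
        (by rcases hf with h | h; exacts [Or.inl h.2, Or.inr h.2])
        (by rcases hg with h | h; exacts [Or.inl h.2, Or.inr h.2])) hfg
  have himg : c '' (A ∪ B) ⊆ Set.Iio k := by
    rintro - ⟨f, hf, rfl⟩
    have hfE : f ∈ G.edgeSet := by rcases hf with h | h <;> exact h.1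
    exact hc.1 f hfE
  calc sdeg G u + sdeg G v - 1 = (A ∪ B).ncard := hcard.symm
    _ = (c '' (A ∪ B)).ncard := (Set.ncard_image_of_injOn hinj).symm
    _ ≤ (Set.Iio k).ncard := Set.ncard_le_ncard himg (Set.finite_Iio k)
    _ = k := by
        rw [show (Set.Iio k) = ↑(Finset.Iio k) by simp, Set.ncard_coe_finset, Nat.card_Iio]

lemma exists_good_leaf {V : Type*} [Fintype V] {G : SimpleGraph V}
    (hac : G.IsAcyclic) (hne : G.edgeSet.Nonempty) :
    ∃ u v p, G.Adj u v ∧ G.neighborSet v = {u} ∧ G.Adj u p ∧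
      ∀ w, G.Adj u w → w ≠ p → G.neighborSet w = {u} := by
  classical
  obtain ⟨e0, he0⟩ := hne
  induction e0 using Sym2.ind with | _ a0 b0 =>
  rw [SimpleGraph.mem_edgeSet] at he0
  set S : Set ℕ := {n | ∃ (a b : V) (P : G.Walk a b), P.IsPath ∧ P.length = n} with hS
  have hbdd : BddAbove S := by
    refine ⟨Fintype.card V, ?_⟩
    rintro n ⟨a, b, P, hP, rfl⟩
    exact (hP.length_lt).le
  have h1S : 1 ∈ S := ⟨a0, b0, (Path.singleton he0).val, (Path.singleton he0).2, by
    simp [Path.singleton]⟩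
  have hSne : S.Nonempty := ⟨1, h1S⟩
  set n := sSup S with hn
  have hnS : n ∈ S := Nat.sSup_mem hSne hbdd
  have hmax : ∀ m ∈ S, m ≤ n := fun m hm => le_csSup hbdd hm
  have hn1 : 1 ≤ n := hmax 1 h1S
  -- key claim: for a maximal path, the start vertex has a unique neighbour: the second vertex
  have key : ∀ (a b : V) (P : G.Walk a b), P.IsPath → P.length = n →
      G.neighborSet a = {P.getVert 1} := by
    intro a b P hP hlen
    ext x
    simp only [mem_neighborSet, Set.mem_singleton_iff]
    constructor
    · intro hax
      by_cases hx : x ∈ P.support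
      · exact (getVert_one_of_adj_mem_support hac hP hax hx).symm
      · exfalso
        have hW : (Walk.cons hax.symm P).IsPath := hP.cons hx
        have : (Walk.cons hax.symm P).length ∈ S := ⟨x, b, _, hW, rfl⟩
        have := hmax _ this
        simp only [Walk.length_cons, hlen] at this
        omega
    · rintro rfl
      have h0 : 0 < P.length := by omega
      have := P.adj_getVert_succ h0
      simpa using this
  obtain ⟨a, b, P, hP, hlen⟩ := hnS
  -- destruct P
  cases P with
  | nil => simp at hlen; omega
  | @cons _ u _ h1 P2 =>
    have hP2 : P2.IsPath := hP.of_cons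
    have hlen2 : P2.length + 1 = n := by simpa [Walk.length_cons] using hlen
    have hNa : G.neighborSet a = {u} := by
      have := key a b (Walk.cons h1 P2) hP hlen
      simpa using this
    have hau : G.Adj a u := h1
    by_cases h2 : 2 ≤ n
    · -- case n ≥ 2
      set p := P2.getVert 1 with hp
      have hup : G.Adj u p := by
        have h0 : 0 < P2.length := by omega
        simpa using P2.adj_getVert_succ h0
      refine ⟨u, a, p, hau.symm, hNa, hup, ?_⟩
      intro w huw hwp
      by_cases hwa : w = a
      · subst hwa; exact hNa
      -- w not in the support of P
      have hwP2 : w ∉ P2.support := by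
        intro hw
        exact hwp ((getVert_one_of_adj_mem_support hac hP2 huw hw).symm ▸ rfl)
      have hwP : w ∉ (Walk.cons h1 P2).support := by
        simp [Walk.support_cons]
        exact ⟨hwa, fun h => hwP2 h⟩
      apply Set.eq_singleton_iff_unique_mem.mpr
      refine ⟨huw.symm, ?_⟩
      intro x hx
      simp only [mem_neighborSet] at hx
      by_contra hxu
      -- x not in support of P
      have hxP : x ∉ (Walk.cons h1 P2).support := by
        intro hxP
        by_cases hxa : x = a
        · -- two paths from a to w
          have haw : G.Adj a w := hxa ▸ hx.symm
          have pw : (Walk.cons h1 (Path.singleton huw).val).IsPath := by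
            refine Walk.IsPath.cons (Path.singleton huw).2 ?_
            simp [Path.singleton]
            exact ⟨hau.ne, fun h => hwa h.symm⟩
          have := isAcyclic_iff_path_unique.mp hac
            ⟨Walk.cons h1 (Path.singleton huw).val, pw⟩ (Path.singleton haw)
          have hval := congrArg (fun q : G.Path a w => q.val.length) this
          simp [Path.singleton] at hval
        · have hxP2 : x ∈ P2.support := by
            have h' := hxP
            rw [Walk.support_cons] at h'
            rcases List.mem_cons.mp h' with h | h
            · exact absurd h hxa
            · exact h
          -- two paths from u to x
          have puwx : (Walk.cons huw (Path.singleton hx).val).IsPath := by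
            refine Walk.IsPath.cons (Path.singleton hx).2 ?_
            simp [Path.singleton]
            exact ⟨huw.ne, hxu ∘ Eq.symm⟩
          have heq := isAcyclic_iff_path_unique.mp hac
            ⟨Walk.cons huw (Path.singleton hx).val, puwx⟩
            ⟨P2.takeUntil x hxP2, hP2.takeUntil hxP2⟩
          have hsupp := congrArg (fun q : G.Path u x => q.val.support) heq
          simp only [Path.singleton] at hsupp
          have hwmem : w ∈ (P2.takeUntil x hxP2).support := by
            rw [← hsupp]
            simp [Walk.support_cons, Path.singleton]
          exact hwP2 (P2.support_takeUntil_subset hxP2 hwmem)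
      -- now build a longer path
      have hxP2 : x ∉ P2.support := fun h => hxP (by simp [Walk.support_cons, h])
      have hpath : (Walk.cons hx.symm (Walk.cons huw.symm P2)).IsPath := by
        refine Walk.IsPath.cons (Walk.IsPath.cons hP2 hwP2) ?_
        simp [Walk.support_cons]
        exact ⟨fun h => hx.ne h.symm, hxP2⟩
      have : (Walk.cons hx.symm (Walk.cons huw.symm P2)).length ∈ S := ⟨x, b, _, hpath, rfl⟩
      have := hmax _ this
      simp [Walk.length_cons] at this
      omega
    · -- case n = 1 : u = b and the graph edge a-b with both leaves
      have hn1' : n = 1 := by omega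
      have hP20 : P2.length = 0 := by omega
      have hub : u = b := P2.eq_of_length_eq_zero hP20
      subst hub
      have hNb : G.neighborSet u = {a} := by
        have hrev : (Walk.cons h1 P2).reverse.IsPath := (Walk.isPath_reverse_iff _).mpr hP
        have hrevlen : (Walk.cons h1 P2).reverse.length = n := by
          rw [Walk.length_reverse]; exact hlen
        have := key u a _ hrev hrevlen
        have ha_mem : a ∈ G.neighborSet u := hau.symm
        rw [this] at ha_mem ⊢
        exact congrArg _ (Set.mem_singleton_iff.mp ha_mem).symm
      refine ⟨u, a, a, hau.symm, hNa, hau.symm, ?_⟩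
      intro w huw hwa
      exfalso
      have : w ∈ G.neighborSet u := huw
      rw [hNb] at this
      exact hwa this

lemma acyclic_mono {V : Type*} {G H : SimpleGraph V} (h : G ≤ H) (ha : H.IsAcyclic) :
    G.IsAcyclic := by
  intro v c hc
  exact ha (c.mapLe h) (hc.mapLe h)

lemma upper_bound {V : Type*} [Fintype V] :
    ∀ (n : ℕ) (G : SimpleGraph V), G.IsAcyclic → G.edgeSet.ncard ≤ n →
    ∀ k, (∀ a b, G.Adj a b → sdeg G a + sdeg G b - 1 ≤ k) →
    ∃ c, IsStrongEdgeColoring G k c := by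
  intro n
  induction n with
  | zero =>
    intro G hac hcard k hk
    have hempty : G.edgeSet = ∅ := by
      rw [← Set.ncard_eq_zero (Set.toFinite _)]; omega
    exact ⟨fun _ => 0, by simp [IsStrongEdgeColoring, IsStrongEdgeColoringOn, hempty]⟩
  | succ n ih =>
    intro G hac hcard k hk
    classical
    by_cases hne : G.edgeSet.Nonempty
    · obtain ⟨u, v, p, huv, hNv, hup, hleaf⟩ := exists_good_leaf hac hne
      set e : Sym2 V := s(u, v) with he_def
      have he : e ∈ G.edgeSet := huv
      -- the only edge through v is e
      have hv_edge : ∀ f ∈ G.edgeSet, v ∈ f → f = e := by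
        intro f hf hv
        obtain ⟨w, hw, rfl⟩ := edge_decomp hf hv
        have : w ∈ G.neighborSet v := hw
        rw [hNv] at this
        rw [this, he_def, Sym2.eq_swap]
      set G' := G.deleteEdges {e} with hG'
      have hle : G' ≤ G := deleteEdges_le _
      have hE' : G'.edgeSet = G.edgeSet \ {e} := edgeSet_deleteEdges _
      have hac' : G'.IsAcyclic := acyclic_mono hle hac
      have hcard' : G'.edgeSet.ncard ≤ n := by
        rw [hE', Set.ncard_diff_singleton_of_mem he]
        omega
      have hdeg' : ∀ x, sdeg G' x ≤ sdeg G x := by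
        intro x
        exact Set.ncard_le_ncard (fun y hy => hle hy) (Set.toFinite _)
      have hk' : ∀ a b, G'.Adj a b → sdeg G' a + sdeg G' b - 1 ≤ k := by
        intro a b hab
        have h1 := hdeg' a
        have h2 := hdeg' b
        have := hk a b (hle hab)
        omega
      obtain ⟨c', hc'⟩ := ih G' hac' hcard' k hk'
      -- degrees
      have hdv : sdeg G v = 1 := by rw [sdeg, hNv]; exact Set.ncard_singleton u
      have hdu : 1 ≤ sdeg G u := (Set.ncard_pos (Set.toFinite _)).mpr ⟨v, huv⟩
      have hdp : 1 ≤ sdeg G p := (Set.ncard_pos (Set.toFinite _)).mpr ⟨u, hup.symm⟩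
      -- the set of edges near e
      set N : Set (Sym2 V) := {f | f ∈ G.edgeSet ∧ f ≠ e ∧ EdgesNear G e f} with hN
      have hNsub : N ⊆ ({f ∈ G.edgeSet | u ∈ f} \ {e}) ∪ ({f ∈ G.edgeSet | p ∈ f} \ {s(u, p)}) := by
        rintro f ⟨hf, hfe, hnear⟩
        rcases hnear with ⟨x, hxe, hxf⟩ | ⟨x, y, hxe, hyf, hxy⟩
        · rcases Sym2.mem_iff.mp hxe with h | h
          · exact Or.inl ⟨⟨hf, h ▸ hxf⟩, hfe⟩
          · exact absurd (hv_edge f hf (h ▸ hxf)) hfe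
        · rcases Sym2.mem_iff.mp hxe with h | h
          · -- x = u
            have hadj : G.Adj u y := h ▸ hxy
            by_cases hyp : y = p
            · by_cases hfup : f = s(u, p)
              · refine Or.inl ⟨⟨hf, ?_⟩, hfe⟩
                rw [hfup]; exact Sym2.mem_mk_left u p
              · exact Or.inr ⟨⟨hf, hyp ▸ hyf⟩, hfup⟩
            · have hNy : G.neighborSet y = {u} := hleaf y hadj hyp
              obtain ⟨w, hw, hfw⟩ := edge_decomp hf hyf
              have hwy : w ∈ G.neighborSet y := hw
              rw [hNy, Set.mem_singleton_iff] at hwy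
              refine Or.inl ⟨⟨hf, ?_⟩, hfe⟩
              rw [hfw, hwy]; exact Sym2.mem_mk_right y u
          · -- x = v : y ∈ N(v) = {u}
            have hadj : G.Adj v y := h ▸ hxy
            have hyu : y ∈ G.neighborSet v := hadj
            rw [hNv, Set.mem_singleton_iff] at hyu
            exact Or.inl ⟨⟨hf, hyu ▸ hyf⟩, hfe⟩
      have hNcard : N.ncard + 2 ≤ sdeg G u + sdeg G p := by
        have h1 : ({f ∈ G.edgeSet | u ∈ f} \ {e}).ncard = sdeg G u - 1 := by
          have hmem1 : e ∈ {f | f ∈ G.edgeSet ∧ u ∈ f} := by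
            exact ⟨he, by rw [he_def]; exact Sym2.mem_mk_left u v⟩
          rw [Set.ncard_diff_singleton_of_mem hmem1, incidence_ncard]
        have h2 : ({f ∈ G.edgeSet | p ∈ f} \ {s(u, p)}).ncard = sdeg G p - 1 := by
          have hmem2 : s(u, p) ∈ {f | f ∈ G.edgeSet ∧ p ∈ f} := by
            exact ⟨hup, Sym2.mem_mk_right u p⟩
          rw [Set.ncard_diff_singleton_of_mem hmem2, incidence_ncard]
        have h3 := Set.ncard_le_ncard hNsub (Set.toFinite _)
        have h4 := Set.ncard_union_le ({f ∈ G.edgeSet | u ∈ f} \ {e})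
          ({f ∈ G.edgeSet | p ∈ f} \ {s(u, p)})
        omega
      have hkN : N.ncard + 1 ≤ k := by
        have := hk u p hup
        omega
      -- fresh colour
      have hfresh : ∃ m, m < k ∧ m ∉ c' '' N := by
        by_contra hcon
        push_neg at hcon
        have hsub : Set.Iio k ⊆ c' '' N := fun m hm => hcon m hm
        have h5 := Set.ncard_le_ncard hsub (Set.toFinite _)
        have h6 : (Set.Iio k).ncard = k := by
          rw [show (Set.Iio k) = ↑(Finset.Iio k) by simp, Set.ncard_coe_finset, Nat.card_Iio]
        have h7 := Set.ncard_image_le (s := N) (f := c') (Set.toFinite _)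
        omega
      obtain ⟨m, hm, hmN⟩ := hfresh
      refine ⟨fun f => if f = e then m else c' f, ?_, ?_⟩
      · intro f hf
        by_cases hfe : f = e
        · simpa [hfe] using hm
        · have : f ∈ G'.edgeSet := by rw [hE']; exact ⟨hf, hfe⟩
          simpa [hfe] using hc'.1 f this
      · intro f hf g hg hfg hnear
        by_cases hfe : f = e
        · subst hfe
          have hgN : g ∈ N := ⟨hg, fun h => hfg h.symm, hnear⟩
          have : c' g ∈ c' '' N := ⟨g, hgN, rfl⟩
          show (if e = e then m else c' e) ≠ (if g = e then m else c' g)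
          rw [if_pos rfl, if_neg (show ¬ g = e from fun h => hfg h.symm)]
          exact fun h => hmN (by rw [h]; exact this)
        · by_cases hge : g = e
          · subst hge
            have hfN : f ∈ N := ⟨hf, hfe, edgesNear_symm hnear⟩
            have : c' f ∈ c' '' N := ⟨f, hfN, rfl⟩
            show (if f = e then m else c' f) ≠ (if e = e then m else c' e)
            rw [if_neg hfe, if_pos rfl]
            exact fun h => hmN (by rw [← h]; exact this)
          · -- both in G'
            have hf' : f ∈ G'.edgeSet := by rw [hE']; exact ⟨hf, hfe⟩
            have hg' : g ∈ G'.edgeSet := by rw [hE']; exact ⟨hg, hge⟩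
            have hnear' : EdgesNear G' f g := by
              rcases hnear with ⟨x, h1, h2⟩ | ⟨x, y, h1, h2, h3⟩
              · exact Or.inl ⟨x, h1, h2⟩
              · refine Or.inr ⟨x, y, h1, h2, ?_⟩
                rw [hG', deleteEdges_adj]
                refine ⟨h3, ?_⟩
                simp only [Set.mem_singleton_iff]
                intro hxy
                -- s(x,y) = e = s(u,v) : then v ∈ {x,y}, so f or g contains v, hence = e
                have hvmem : v ∈ s(x, y) := hxy ▸ Sym2.mem_mk_right u v
                rcases Sym2.mem_iff.mp hvmem with rfl | rfl
                · exact hfe (hv_edge f hf h1)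
                · exact hge (hv_edge g hg h2)
            show (if f = e then m else c' f) ≠ (if g = e then m else c' g)
            rw [if_neg hfe, if_neg hge]
            exact hc'.2 f hf' g hg' hfg hnear'
    · have hempty : G.edgeSet = ∅ := Set.not_nonempty_iff_eq_empty.mp hne
      exact ⟨fun _ => 0, by simp [IsStrongEdgeColoring, IsStrongEdgeColoringOn, hempty]⟩

open Classical in
/-- For a tree `G`, the strong chromatic index equals the maximum of `d(u) + d(v) - 1`
over the edges `uv` of `G`. -/
theorem sci_tree {V : Type*} [Fintype V] (G : SimpleGraph V) (ht : G.IsTree) :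
    sci G = Finset.univ.sup
      (fun q : V × V => if G.Adj q.1 q.2 then sdeg G q.1 + sdeg G q.2 - 1 else 0) := by
  classical
  have hbound : ∀ a b, G.Adj a b → sdeg G a + sdeg G b - 1 ≤ Finset.univ.sup
      (fun q : V × V => if G.Adj q.1 q.2 then sdeg G q.1 + sdeg G q.2 - 1 else 0) := by
    intro a b hab
    have h := Finset.le_sup
      (f := fun q : V × V => if G.Adj q.1 q.2 then sdeg G q.1 + sdeg G q.2 - 1 else 0)
      (Finset.mem_univ (a, b))
    simpa [hab] using h
  obtain ⟨c, hc⟩ := upper_bound G.edgeSet.ncard G ht.IsAcyclic le_rfl _ hbound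
  apply le_antisymm
  · exact Nat.sInf_le ⟨c, hc⟩
  · refine le_csInf ⟨_, c, hc⟩ ?_
    rintro k ⟨c', hc'⟩
    refine Finset.sup_le ?_
    rintro ⟨a, b⟩ -
    by_cases hab : G.Adj a b
    · simpa [hab] using lower_bound hc' hab
    · simp [hab]
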